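/- Let G be a topological group and K a strongly neutral subgroup of G (i.e., for every open set O containing K there is an open neighborhood V of the identity with KV ⊆ O). Then for every closed subset F of G, both KF and FK are closed in G. -/

import Mathlib

open scoped Pointwise

lemma stmt_0_aux {G : Type*} [Group G] [TopologicalSpace G] [IsTopologicalGroup G]
    (K : Subgroup G)
    (hK : ∀ O : Set G, IsOpen O → (K : Set G) ⊆ O →
      ∃ V : Set G, IsOpen V ∧ (1 : G) ∈ V ∧ (K : Set G) * V ⊆ O)
    (F : Set G) (hF : IsClosed F) :
    IsClosed (F * (K : Set G)) := by
  rw [← isOpen_compl_iff, isOpen_iff_forall_mem_open]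
  intro x hx
  set O : Set G := {g | x * g⁻¹ ∉ F} with hO_def
  have hOopen : IsOpen O := by
    have : O = ((fun g : G => x * g⁻¹) ⁻¹' F)ᶜ := rfl
    rw [this]
    exact (hF.preimage (by continuity)).isOpen_compl
  have hKO : (K : Set G) ⊆ O := by
    intro k hk hmem
    exact hx ⟨x * k⁻¹, hmem, k, hk, by group⟩
  obtain ⟨V, hVo, hV1, hVsub⟩ := hK O hOopen hKO
  refine ⟨(fun y : G => x⁻¹ * y) ⁻¹' (V ∩ V⁻¹),
    ?_, (hVo.inter hVo.inv).preimage (by continuity), by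
      simp only [Set.mem_preimage, inv_mul_cancel, Set.mem_inter_iff]
      exact ⟨hV1, by simpa using hV1⟩⟩
  intro y hy hyFK
  obtain ⟨f, hf, k, hk, hfk⟩ := hyFK
  have hv : x⁻¹ * y ∈ V := hy.1
  have hvinv : (x⁻¹ * y)⁻¹ ∈ V := hy.2
  have hmem : k * (x⁻¹ * y)⁻¹ ∈ O := hVsub ⟨k, hk, (x⁻¹ * y)⁻¹, hvinv, rfl⟩
  apply hmem
  have : x * (k * (x⁻¹ * y)⁻¹)⁻¹ = y * k⁻¹ := by group
  rw [this, ← hfk]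
  simpa using hf

/-- If `K` is a strongly neutral subgroup of a topological group `G`,
then `KF` and `FK` are closed for every closed `F ⊆ G`. -/
theorem stmt_0 {G : Type*} [Group G] [TopologicalSpace G] [IsTopologicalGroup G]
    (K : Subgroup G)
    (hK : ∀ O : Set G, IsOpen O → (K : Set G) ⊆ O →
      ∃ V : Set G, IsOpen V ∧ (1 : G) ∈ V ∧ (K : Set G) * V ⊆ O)
    (F : Set G) (hF : IsClosed F) :
    IsClosed ((K : Set G) * F) ∧ IsClosed (F * (K : Set G)) := by
  refine ⟨?_, stmt_0_aux K hK F hF⟩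
  have h1 : IsClosed (F⁻¹ * (K : Set G)) := stmt_0_aux K hK F⁻¹ hF.inv
  have h2 : ((K : Set G) * F) = (F⁻¹ * (K : Set G))⁻¹ := by
    rw [mul_inv_rev, inv_inv]
    simp
  rw [h2]
  exact h1.inv
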